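/- Let f : ℝ^d → ℝ be Lipschitz continuous with respect to the sup norm and SISTr. For each δ > 0 and x ∈ ℝ^d, the number ε_{x,δ} is well defined (a smallest such ε exists), and for every bounded set D ⊆ ℝ^d one has sup_{x ∈ D} ε_{x,δ} < ∞; moreover sup_{x ∈ D} ε_{x,δ} is nondecreasing in δ and tends to 0 as δ ↓ 0. -/
import Mathlib


/-- `g` is strictly increasing under scalar translation (SISTr) at `x`. -/
def SISTrAt {d : ℕ} (g : (Fin d → ℝ) → ℝ) (x : Fin d → ℝ) : Prop :=
  StrictMono (fun c : ℝ => g (fun i => x i + c)) ∧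
    Function.Surjective (fun c : ℝ => g (fun i => x i + c))

/-- `g` is SISTr if it is SISTr at every point. -/
def SISTr {d : ℕ} (g : (Fin d → ℝ) → ℝ) : Prop :=
  ∀ x : Fin d → ℝ, SISTrAt g x

section Aux

variable {d : ℕ}

/-- The gap function `ε ↦ min (f(x+ε) − f(x)) (f(x) − f(x−ε))`. -/
def gapFun (f : (Fin d → ℝ) → ℝ) (x : Fin d → ℝ) (ε : ℝ) : ℝ :=
  min (f (fun i => x i + ε) - f x) (f x - f (fun i => x i - ε))

/-- The (unique) positive solution of `gapFun f x ε = δ`. -/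
noncomputable def epsFun (f : (Fin d → ℝ) → ℝ) (x : Fin d → ℝ) (δ : ℝ) : ℝ :=
  Classical.epsilon (fun ε => 0 < ε ∧ gapFun f x ε = δ)

lemma gapFun_strictMono {f : (Fin d → ℝ) → ℝ} (hS : SISTr f) (x : Fin d → ℝ) :
    StrictMono (gapFun f x) := by
  intro a b hab
  have h := (hS x).1
  have h1 : f (fun i => x i + a) < f (fun i => x i + b) := h hab
  have h2 : f (fun i => x i - b) < f (fun i => x i - a) := by
    have := h (show -b < -a by linarith)
    simpa [sub_eq_add_neg] using this
  exact min_lt_min (by linarith) (by linarith)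

lemma gapFun_zero {f : (Fin d → ℝ) → ℝ} (x : Fin d → ℝ) : gapFun f x 0 = 0 := by
  simp [gapFun]

lemma gapFun_continuous {f : (Fin d → ℝ) → ℝ} (hf : Continuous f) (x : Fin d → ℝ) :
    Continuous (gapFun f x) := by
  apply Continuous.min
  · exact ((hf.comp (continuous_pi fun i => continuous_const.add continuous_id)).sub
      continuous_const)
  · exact (continuous_const.sub
      (hf.comp (continuous_pi fun i => continuous_const.sub continuous_id)))

lemma gapFun_continuous_in_x {f : (Fin d → ℝ) → ℝ} (hf : Continuous f) (η : ℝ) :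
    Continuous (fun x => gapFun f x η) := by
  apply Continuous.min
  · exact ((hf.comp (continuous_pi fun i => (continuous_apply i).add continuous_const)).sub hf)
  · exact (hf.sub (hf.comp (continuous_pi fun i => (continuous_apply i).sub continuous_const)))

lemma gapFun_exists {f : (Fin d → ℝ) → ℝ} (hf : Continuous f) (hS : SISTr f)
    (x : Fin d → ℝ) {δ : ℝ} (hδ : 0 < δ) : ∃ ε, 0 < ε ∧ gapFun f x ε = δ := by
  obtain ⟨E₁, hE₁⟩ := (hS x).2 (f x + δ)
  obtain ⟨E₂, hE₂⟩ := (hS x).2 (f x - δ)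
  set E : ℝ := max E₁ (-E₂) with hEdef
  have hmono := (hS x).1.monotone
  have hgE : δ ≤ gapFun f x E := by
    have h1 : f x + δ ≤ f (fun i => x i + E) := by
      rw [← hE₁]; exact hmono (le_max_left _ _)
    have h2 : f (fun i => x i - E) ≤ f x - δ := by
      have : f (fun i => x i + -E) ≤ f (fun i => x i + E₂) := by
        exact hmono (by simp [hEdef]; exact neg_le_neg (le_max_right _ _) |>.trans (by simp))
      simp only [sub_eq_add_neg]
      calc f (fun i => x i + -E) ≤ f (fun i => x i + E₂) := this
        _ = f x - δ := hE₂
    exact le_min (by linarith) (by linarith)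
  have h0E : (0:ℝ) ≤ E := by
    by_contra hneg
    push_neg at hneg
    have := (gapFun_strictMono hS x) hneg
    rw [gapFun_zero] at this
    linarith [hgE]
  have hIVT := intermediate_value_Icc h0E (gapFun_continuous hf x).continuousOn
  have hmem : δ ∈ Set.Icc (gapFun f x 0) (gapFun f x E) := by
    rw [gapFun_zero]; exact ⟨hδ.le, hgE⟩
  obtain ⟨ε, _, hεeq⟩ := hIVT hmem
  refine ⟨ε, ?_, hεeq⟩
  have : gapFun f x 0 < gapFun f x ε := by rw [gapFun_zero, hεeq]; exact hδ
  exact (gapFun_strictMono hS x).lt_iff_lt.mp this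

lemma epsFun_spec {f : (Fin d → ℝ) → ℝ} (hf : Continuous f) (hS : SISTr f)
    (x : Fin d → ℝ) {δ : ℝ} (hδ : 0 < δ) :
    0 < epsFun f x δ ∧ gapFun f x (epsFun f x δ) = δ :=
  Classical.epsilon_spec (gapFun_exists hf hS x hδ)

lemma epsFun_le {f : (Fin d → ℝ) → ℝ} (hf : Continuous f) (hS : SISTr f)
    (x : Fin d → ℝ) {δ η : ℝ} (hδ : 0 < δ) (hη : δ ≤ gapFun f x η) :
    epsFun f x δ ≤ η := by
  have hspec := epsFun_spec hf hS x hδ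
  have : gapFun f x (epsFun f x δ) ≤ gapFun f x η := by rw [hspec.2]; exact hη
  exact (gapFun_strictMono hS x).le_iff_le.mp this

end Aux

/-- For a Lipschitz SISTr `f`, for each `δ > 0` and `x` the quantity
`ε_{x,δ}`, the smallest `ε > 0` with
`min (f(x+ε) − f(x)) (f(x) − f(x−ε)) = δ`, is well defined; and for every
bounded set `D`, `sup_{x ∈ D} ε_{x,δ}` is finite, nondecreasing in `δ`, and
tends to `0` as `δ ↓ 0`. -/
theorem statement1 {d : ℕ} (hd : 1 ≤ d) (f : (Fin d → ℝ) → ℝ)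
    (hLip : ∃ L : ℝ, ∀ x y : Fin d → ℝ, |f x - f y| ≤ L * ‖x - y‖)
    (hS : SISTr f) :
    ∃ eps : (Fin d → ℝ) → ℝ → ℝ,
      (∀ (x : Fin d → ℝ), ∀ δ > (0 : ℝ),
        IsLeast {ε : ℝ | 0 < ε ∧
          min (f (fun i => x i + ε) - f x) (f x - f (fun i => x i - ε)) = δ}
          (eps x δ)) ∧
      (∀ D : Set (Fin d → ℝ), Bornology.IsBounded D →
        (∀ δ > (0 : ℝ), BddAbove ((fun x => eps x δ) '' D)) ∧
        (∀ δ₁ δ₂ : ℝ, 0 < δ₁ → δ₁ ≤ δ₂ →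
          sSup ((fun x => eps x δ₁) '' D) ≤ sSup ((fun x => eps x δ₂) '' D)) ∧
        Filter.Tendsto (fun δ : ℝ => sSup ((fun x => eps x δ) '' D))
          (nhdsWithin 0 (Set.Ioi 0)) (nhds 0)) := by
  obtain ⟨L₀, hL₀⟩ := hLip
  set L : ℝ := max L₀ 0 with hLdef
  have hLnn : 0 ≤ L := le_max_right _ _
  have hL : ∀ x y : Fin d → ℝ, |f x - f y| ≤ L * ‖x - y‖ := fun x y =>
    (hL₀ x y).trans (mul_le_mul_of_nonneg_right (le_max_left _ _) (norm_nonneg _))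
  have hf : Continuous f := by
    have : LipschitzWith ⟨L, hLnn⟩ f := by
      apply LipschitzWith.of_dist_le_mul
      intro x y
      rw [Real.dist_eq, dist_eq_norm]
      exact hL x y
    exact this.continuous
  refine ⟨epsFun f, ?_, ?_⟩
  · intro x δ hδ
    have hspec := epsFun_spec hf hS x hδ
    constructor
    · exact hspec
    · rintro ε ⟨hε0, hεeq⟩
      have : gapFun f x (epsFun f x δ) = gapFun f x ε := by
        rw [hspec.2]; exact hεeq.symm
      exact le_of_eq ((gapFun_strictMono hS x).injective this)
  · intro D hD
    rcases D.eq_empty_or_nonempty with rfl | hne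
    · refine ⟨fun δ _ => by simp, fun δ₁ δ₂ _ _ => by simp, ?_⟩
      simp only [Set.image_empty, Real.sSup_empty]
      exact tendsto_const_nhds
    obtain ⟨R, hR⟩ := hD.subset_closedBall 0
    have hRx : ∀ x ∈ D, ‖x‖ ≤ R := by
      intro x hx
      have := hR hx
      rwa [Metric.mem_closedBall, dist_zero_right] at this
    have hR0 : 0 ≤ R := by
      obtain ⟨x, hx⟩ := hne
      exact (norm_nonneg x).trans (hRx x hx)
    have hnormx : ∀ x : Fin d → ℝ, ∀ c : ℝ,
        |f (fun i => x i + c) - f (fun i => (0:ℝ) + c)| ≤ L * ‖x‖ := by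
      intro x c
      have := hL (fun i => x i + c) (fun i => (0:ℝ) + c)
      have heq : (fun i => x i + c) - (fun i => (0:ℝ) + c) = x := by
        funext i; simp [Pi.sub_apply]
      rwa [heq] at this
    -- key bound: for each δ > 0 there is E with eps x δ ≤ E for all x ∈ D
    have hbound : ∀ δ : ℝ, 0 < δ → ∃ E : ℝ, ∀ x ∈ D, epsFun f x δ ≤ E := by
      intro δ hδ
      obtain ⟨E₁, hE₁⟩ := (hS 0).2 (f 0 + (δ + 2 * L * R))
      obtain ⟨E₂, hE₂⟩ := (hS 0).2 (f 0 - (δ + 2 * L * R))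
      simp only [Pi.zero_apply] at hE₁ hE₂
      set E : ℝ := max E₁ (-E₂) with hEdef
      have hmono := (hS 0).1.monotone
      refine ⟨E, fun x hx => ?_⟩
      apply epsFun_le hf hS x hδ
      have hxR := hRx x hx
      have hLxR : L * ‖x‖ ≤ L * R := mul_le_mul_of_nonneg_left hxR hLnn
      -- f(x+E) ≥ f(0+E) - LR
      have h1 : f (fun i => (0:ℝ) + E) - L * R ≤ f (fun i => x i + E) := by
        have := abs_le.mp (hnormx x E)
        linarith [this.1]
      -- f x ≤ f 0 + LR
      have h2 : f x ≤ f 0 + L * R := by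
        have h := hnormx x 0
        have heq1 : (fun i => x i + (0:ℝ)) = x := by funext i; simp
        have heq2 : (fun _ : Fin d => (0:ℝ) + (0:ℝ)) = (0 : Fin d → ℝ) := by funext i; simp
        rw [heq1, heq2] at h
        have := (abs_le.mp h).2
        linarith
      -- f 0 - LR ≤ f x
      have h2' : f 0 - L * R ≤ f x := by
        have h := hnormx x 0
        have heq1 : (fun i => x i + (0:ℝ)) = x := by funext i; simp
        have heq2 : (fun _ : Fin d => (0:ℝ) + (0:ℝ)) = (0 : Fin d → ℝ) := by funext i; simp
        rw [heq1, heq2] at h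
        have := (abs_le.mp h).1
        linarith
      -- f(x-E) ≤ f(0-E) + LR
      have h3 : f (fun i => x i + -E) ≤ f (fun i => (0:ℝ) + -E) + L * R := by
        have := abs_le.mp (hnormx x (-E))
        linarith [this.2]
      -- monotonicity at 0
      have h4 : f 0 + (δ + 2 * L * R) ≤ f (fun i => (0:ℝ) + E) := by
        rw [← hE₁]
        exact hmono (le_max_left _ _)
      have h5 : f (fun i => (0:ℝ) + -E) ≤ f 0 - (δ + 2 * L * R) := by
        rw [← hE₂]
        exact hmono (neg_le.mpr (le_max_right _ _))
      apply le_min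
      · linarith
      · have heq : (fun i => x i - E) = (fun i => x i + -E) := by
          funext i; ring
        rw [heq]
        linarith
    constructor
    · intro δ hδ
      obtain ⟨E, hE⟩ := hbound δ hδ
      exact ⟨E, by rintro y ⟨x, hx, rfl⟩; exact hE x hx⟩
    have hBdd : ∀ δ > (0:ℝ), BddAbove ((fun x => epsFun f x δ) '' D) := by
      intro δ hδ
      obtain ⟨E, hE⟩ := hbound δ hδ
      exact ⟨E, by rintro y ⟨x, hx, rfl⟩; exact hE x hx⟩
    constructor
    · intro δ₁ δ₂ hδ₁ h12
      have hδ₂ : 0 < δ₂ := lt_of_lt_of_le hδ₁ h12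
      apply csSup_le (hne.image _)
      rintro y ⟨x, hx, rfl⟩
      have hle : epsFun f x δ₁ ≤ epsFun f x δ₂ := by
        apply epsFun_le hf hS x hδ₁
        rw [(epsFun_spec hf hS x hδ₂).2]
        exact h12
      exact hle.trans (le_csSup (hBdd δ₂ hδ₂) ⟨x, hx, rfl⟩)
    · rw [Metric.tendsto_nhdsWithin_nhds]
      intro η hη
      -- use compactness of closure D
      have hK : IsCompact (closure D) := hD.isCompact_closure
      have hKne : (closure D).Nonempty := hne.closure
      obtain ⟨x₀, hx₀K, hx₀min⟩ := hK.exists_isMinOn hKne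
        (gapFun_continuous_in_x hf (η/2)).continuousOn
      set m : ℝ := gapFun f x₀ (η/2) with hmdef
      have hm : 0 < m := by
        have : gapFun f x₀ 0 < gapFun f x₀ (η/2) :=
          (gapFun_strictMono hS x₀) (by linarith)
        rwa [gapFun_zero] at this
      refine ⟨m, hm, ?_⟩
      intro δ hδmem hδdist
      have hδ : 0 < δ := hδmem
      rw [Real.dist_eq, sub_zero] at hδdist
      have hδm : δ < m := lt_of_abs_lt hδdist
      have hsup_le : sSup ((fun x => epsFun f x δ) '' D) ≤ η / 2 := by
        apply csSup_le (hne.image _)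
        rintro y ⟨x, hx, rfl⟩
        apply epsFun_le hf hS x hδ
        calc δ ≤ m := hδm.le
          _ ≤ gapFun f x (η/2) := hx₀min (subset_closure hx)
      have hsup_nonneg : 0 ≤ sSup ((fun x => epsFun f x δ) '' D) := by
        obtain ⟨x₁, hx₁⟩ := hne
        have := le_csSup (hBdd δ hδ) (Set.mem_image_of_mem _ hx₁)
        have hpos := (epsFun_spec hf hS x₁ hδ).1
        linarith
      rw [Real.dist_eq, sub_zero, abs_of_nonneg hsup_nonneg]
      linarith
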